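/- arXiv:0906.4429 — 4 statements merged into one kernel-verified Lean document; each statement's English description precedes it below -/
import Mathlib

section
/- Suppose a rational function f ∈ k̄(t) together with nonzero elements α₁, …, α_s ∈ k̄ and rational functions μ₁, …, μ_s ∈ 𝔽_q(t) (viewed inside k̄(t) via the inclusion 𝔽_q ⊆ k̄) satisfies the σ-difference equation (t − θ)·f^{(-1)} − f = Σ_{i=1}^{s} μ_i · α_i^{(-1)} · (t − θ). Then f is regular at t = θ. -/
open Polynomial

/-- The ring homomorphism `K(t) → L(t)` applying a field embedding `c : K → L` to all
coefficients of the numerator and denominator of a rational function. -/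
noncomputable def RatFunc.coeffMap {K L : Type*} [Field K] [Field L] (c : K →+* L) :
    RatFunc K →+* RatFunc L :=
  RatFunc.mapRingHom (Polynomial.mapRingHom c)
    (nonZeroDivisors_le_comap_nonZeroDivisors_of_injective _
      (Polynomial.map_injective _ c.injective))

section Aux

variable {K : Type*} [Field K]

lemma ratfunc_mul_denom (h : RatFunc K) :
    h * algebraMap K[X] (RatFunc K) h.denom = algebraMap K[X] (RatFunc K) h.num := by
  exact ((div_eq_iff (RatFunc.algebraMap_ne_zero (RatFunc.denom_ne_zero h))).mp
    (RatFunc.num_div_denom h)).symm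

lemma reg_of_rep {h : RatFunc K} {a : K} {P Q : K[X]} (hQ : Q.eval a ≠ 0)
    (hrep : h * algebraMap K[X] (RatFunc K) Q = algebraMap K[X] (RatFunc K) P) :
    h.denom.eval a ≠ 0 := by
  have hQ0 : Q ≠ 0 := fun h0 => hQ (by simp [h0])
  have hrep' : h = algebraMap K[X] (RatFunc K) P / algebraMap K[X] (RatFunc K) Q := by
    rw [eq_div_iff (RatFunc.algebraMap_ne_zero hQ0)]; exact hrep
  obtain ⟨k, hk⟩ := (RatFunc.denom_dvd hQ0).mpr ⟨P, hrep'⟩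
  intro h0
  apply hQ
  rw [hk, Polynomial.eval_mul, h0, zero_mul]

lemma reg_add {h₁ h₂ : RatFunc K} {a : K} (H1 : h₁.denom.eval a ≠ 0)
    (H2 : h₂.denom.eval a ≠ 0) : (h₁ + h₂).denom.eval a ≠ 0 := by
  apply reg_of_rep (P := h₁.num * h₂.denom + h₂.num * h₁.denom) (Q := h₁.denom * h₂.denom)
  · rw [Polynomial.eval_mul]; exact mul_ne_zero H1 H2
  · rw [map_mul, map_add, map_mul, map_mul, ← ratfunc_mul_denom h₁, ← ratfunc_mul_denom h₂]
    ring

lemma reg_sub {h₁ h₂ : RatFunc K} {a : K} (H1 : h₁.denom.eval a ≠ 0)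
    (H2 : h₂.denom.eval a ≠ 0) : (h₁ - h₂).denom.eval a ≠ 0 := by
  apply reg_of_rep (P := h₁.num * h₂.denom - h₂.num * h₁.denom) (Q := h₁.denom * h₂.denom)
  · rw [Polynomial.eval_mul]; exact mul_ne_zero H1 H2
  · rw [map_mul, map_sub, map_mul, map_mul, ← ratfunc_mul_denom h₁, ← ratfunc_mul_denom h₂]
    ring

lemma reg_mul {h₁ h₂ : RatFunc K} {a : K} (H1 : h₁.denom.eval a ≠ 0)
    (H2 : h₂.denom.eval a ≠ 0) : (h₁ * h₂).denom.eval a ≠ 0 := by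
  apply reg_of_rep (P := h₁.num * h₂.num) (Q := h₁.denom * h₂.denom)
  · rw [Polynomial.eval_mul]; exact mul_ne_zero H1 H2
  · rw [map_mul, map_mul, ← ratfunc_mul_denom h₁, ← ratfunc_mul_denom h₂]
    ring

lemma reg_algebraMap (r : K[X]) (a : K) :
    ((algebraMap K[X] (RatFunc K) r).denom).eval a ≠ 0 := by
  apply reg_of_rep (P := r) (Q := 1)
  · simp
  · simp

lemma reg_sum {ι : Type*} (t : Finset ι) (g : ι → RatFunc K) (a : K)
    (H : ∀ i ∈ t, (g i).denom.eval a ≠ 0) : (∑ i ∈ t, g i).denom.eval a ≠ 0 := by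
  classical
  induction t using Finset.cons_induction with
  | empty =>
      rw [Finset.sum_empty]
      simpa using reg_algebraMap (K := K) 0 a
  | cons i t hi ih =>
      rw [Finset.sum_cons]
      exact reg_add (H i (Finset.mem_cons_self i t))
        (ih fun j hj => H j (Finset.mem_cons_of_mem hj))

lemma coeffMap_algebraMap {L : Type*} [Field L] (c : K →+* L) (r : K[X]) :
    RatFunc.coeffMap c (algebraMap K[X] (RatFunc K) r)
      = algebraMap L[X] (RatFunc L) (r.map c) := by
  unfold RatFunc.coeffMap
  have h1 : algebraMap K[X] (RatFunc K) r
      = algebraMap K[X] (RatFunc K) r / algebraMap K[X] (RatFunc K) 1 := by simp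
  rw [h1]
  rw [show (RatFunc.mapRingHom (Polynomial.mapRingHom c)
      (nonZeroDivisors_le_comap_nonZeroDivisors_of_injective _
        (Polynomial.map_injective _ c.injective)) :
      RatFunc K → RatFunc L) = RatFunc.map (Polynomial.mapRingHom c) _ from
    RatFunc.coe_mapRingHom_eq_coe_map _ _]
  rw [RatFunc.map_apply_div]
  simp

end Aux

/-- If `f ∈ k̄(t)`, nonzero `α₁, …, α_s ∈ k̄` and `μ₁, …, μ_s ∈ 𝔽_q(t)` satisfy
`(t − θ)·f⁽⁻¹⁾ − f = ∑ μᵢ·αᵢ⁽⁻¹⁾·(t − θ)`, then `f` is regular at `t = θ`. -/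
theorem carlitz_f_regular_at_theta
    -- `q = p ^ m` is a prime power and `𝔽_q` is the field with `q` elements
    (p m q : ℕ) [Fact p.Prime] (hm : 0 < m) (hq : q = p ^ m)
    (Fq : Type*) [Field Fq] [Fintype Fq] [CharP Fq p] (hcard : Fintype.card Fq = q)
    -- `k̄` is an algebraic closure of `k = 𝔽_q(θ)`, and `θ` is the image of the variable
    (kbar : Type*) [Field kbar] [CharP kbar p] [PerfectRing kbar p]
    [Algebra (RatFunc Fq) kbar] [IsAlgClosure (RatFunc Fq) kbar]
    (θ : kbar) (hθ : θ = algebraMap (RatFunc Fq) kbar RatFunc.X)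
    -- `ψ : a ↦ a^{1/q}` is the inverse of the `q`-power Frobenius of `k̄`
    (ψ : kbar ≃+* kbar) (hψ : ψ = (iterateFrobeniusEquiv kbar p m).symm)
    -- the data `f`, `αᵢ`, `μᵢ`
    (s : ℕ) (α : Fin s → kbar) (hα : ∀ i, α i ≠ 0) (μ : Fin s → RatFunc Fq)
    (f : RatFunc kbar)
    -- the σ-difference equation `(t − θ)·f⁽⁻¹⁾ − f = ∑ μᵢ·αᵢ⁽⁻¹⁾·(t − θ)`
    (heq : (RatFunc.X - RatFunc.C θ) * RatFunc.coeffMap (ψ : kbar →+* kbar) f - f =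
      ∑ i, RatFunc.coeffMap
          ((algebraMap (RatFunc Fq) kbar).comp (algebraMap Fq (RatFunc Fq))) (μ i) *
        RatFunc.C (ψ (α i)) * (RatFunc.X - RatFunc.C θ)) :
    -- `f` is regular at `t = θ`: the denominator of `f` in lowest terms does not vanish at `θ`
    Polynomial.eval θ f.denom ≠ 0 := by
  intro h0
  set c : Fq →+* kbar :=
    (algebraMap (RatFunc Fq) kbar).comp (algebraMap Fq (RatFunc Fq)) with hc
  set A : RatFunc Fq →+* kbar := (algebraMap (RatFunc Fq) kbar : RatFunc Fq →+* kbar) with hA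
  have hq2 : 1 < q := by
    rw [hq]
    exact Nat.one_lt_pow hm.ne' (Fact.out : p.Prime).one_lt
  -- transcendence of θ over the image of Fq
  have hT : ∀ r : Polynomial Fq, (r.map c).eval θ = 0 → r = 0 := by
    intro r hr
    have hmm : r.map c = (r.map (algebraMap Fq (RatFunc Fq))).map A := by
      rw [Polynomial.map_map]
    have hkey : ((r.map (algebraMap Fq (RatFunc Fq))).map A).eval θ
        = A (algebraMap (Polynomial Fq) (RatFunc Fq) r) := by
      rw [hθ, Polynomial.eval_map, Polynomial.eval₂_at_apply]
      congr 1
      rw [Polynomial.eval_map]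
      have h2 := Polynomial.hom_eval₂ r Polynomial.C
        (algebraMap (Polynomial Fq) (RatFunc Fq)) Polynomial.X
      rw [Polynomial.eval₂_C_X] at h2
      exact h2.symm
    rw [hmm, hkey] at hr
    have h3 : algebraMap (Polynomial Fq) (RatFunc Fq) r = 0 := by
      apply (algebraMap (RatFunc Fq) kbar).injective
      rw [map_zero]; exact hr
    by_contra hr0
    exact RatFunc.algebraMap_ne_zero hr0 h3
  have hTpow : ∀ e : ℕ, 1 ≤ e → ∀ r : Polynomial Fq, r ≠ 0 →
      (r.map c).eval (θ ^ e) ≠ 0 := by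
    intro e he r hr0 hev
    have hkey : ((r.comp (Polynomial.X ^ e)).map c).eval θ = (r.map c).eval (θ ^ e) := by
      rw [Polynomial.map_comp, Polynomial.eval_comp, Polynomial.map_pow, Polynomial.map_X,
        Polynomial.eval_pow, Polynomial.eval_X]
    have h2 := hT _ (hkey.trans hev)
    rcases Polynomial.comp_eq_zero_iff.mp h2 with h | ⟨_, h⟩
    · exact hr0 h
    · have hco : (Polynomial.X ^ e : Polynomial Fq).coeff 0 = 0 := by
        rw [Polynomial.coeff_X_pow, if_neg (by omega)]
      rw [hco, map_zero] at h
      exact pow_ne_zero e Polynomial.X_ne_zero h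
  -- regularity of the right-hand side at all θ^e, e ≥ 1
  have hGreg : ∀ e : ℕ, 1 ≤ e →
      ((∑ i, RatFunc.coeffMap c (μ i) * RatFunc.C (ψ (α i))
        * (RatFunc.X - RatFunc.C θ)).denom).eval (θ ^ e) ≠ 0 := by
    intro e he
    apply reg_sum
    intro i _
    apply reg_mul
    apply reg_mul
    · -- coeffMap c (μ i) is regular at θ^e
      have e0 := ratfunc_mul_denom (μ i)
      have e1 := congrArg (RatFunc.coeffMap c) e0
      rw [map_mul, coeffMap_algebraMap, coeffMap_algebraMap] at e1
      exact reg_of_rep (hTpow e he _ (RatFunc.denom_ne_zero (μ i))) e1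
    · rw [← RatFunc.algebraMap_C (ψ (α i))]
      exact reg_algebraMap _ _
    · rw [show (RatFunc.X - RatFunc.C θ : RatFunc kbar)
          = algebraMap (Polynomial kbar) (RatFunc kbar) (Polynomial.X - Polynomial.C θ) by
        rw [map_sub, RatFunc.algebraMap_X, RatFunc.algebraMap_C]]
      exact reg_algebraMap _ _
  -- ψ facts
  have hψs : ∀ x : kbar, ψ.symm x = x ^ q := by
    intro x
    rw [hψ, RingEquiv.symm_symm, hq]
    exact iterateFrobeniusEquiv_def kbar p m x
  have hψeval : ∀ (r : Polynomial kbar) (a : kbar),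
      (r.map (ψ : kbar →+* kbar)).eval a = ψ (r.eval (ψ.symm a)) := by
    intro r a
    conv_lhs => rw [← ψ.apply_symm_apply a]
    rw [Polynomial.eval_map]
    exact Polynomial.eval₂_at_apply (ψ : kbar →+* kbar) (ψ.symm a)
  -- rearranged equation
  have hf : f = (RatFunc.X - RatFunc.C θ) * RatFunc.coeffMap (ψ : kbar →+* kbar) f -
      ∑ i, RatFunc.coeffMap c (μ i) * RatFunc.C (ψ (α i)) * (RatFunc.X - RatFunc.C θ) := by
    rw [← heq]; ring
  -- the main induction: θ^(q^n) is a root of the denominator for all n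
  have hroot : ∀ n : ℕ, f.denom.eval (θ ^ q ^ n) = 0 := by
    intro n
    induction n with
    | zero => simpa using h0
    | succ n ih =>
        by_contra hreg
        have e0 := ratfunc_mul_denom f
        have e1 := congrArg (RatFunc.coeffMap (ψ : kbar →+* kbar)) e0
        rw [map_mul, coeffMap_algebraMap, coeffMap_algebraMap] at e1
        have hQ : ((f.denom.map (ψ : kbar →+* kbar))).eval (θ ^ q ^ n) ≠ 0 := by
          rw [hψeval]
          intro hz
          apply hreg
          have hsy : ψ.symm (θ ^ q ^ n) = θ ^ q ^ (n + 1) := by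
            rw [hψs, ← pow_mul, ← pow_succ]
          rw [hsy] at hz
          have h5 : ψ (Polynomial.eval (θ ^ q ^ (n + 1)) f.denom) = ψ 0 := by
            rw [map_zero]; exact hz
          exact ψ.injective h5
        have hF' : (RatFunc.coeffMap (ψ : kbar →+* kbar) f).denom.eval (θ ^ q ^ n) ≠ 0 :=
          reg_of_rep hQ e1
        have hXreg : ((RatFunc.X - RatFunc.C θ : RatFunc kbar).denom).eval (θ ^ q ^ n) ≠ 0 := by
          rw [show (RatFunc.X - RatFunc.C θ : RatFunc kbar)
              = algebraMap (Polynomial kbar) (RatFunc kbar) (Polynomial.X - Polynomial.C θ) by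
            rw [map_sub, RatFunc.algebraMap_X, RatFunc.algebraMap_C]]
          exact reg_algebraMap _ _
        have hfreg : f.denom.eval (θ ^ q ^ n) ≠ 0 := by
          rw [hf]
          exact reg_sub (reg_mul hXreg hF') (hGreg (q ^ n) (Nat.one_le_pow _ _ (by omega)))
        exact hfreg ih
  -- injectivity of n ↦ θ^(q^n)
  have hkeyne : ∀ a b : ℕ, a < b → θ ^ q ^ a ≠ θ ^ q ^ b := by
    intro a b hab hEq
    have hlt : q ^ a < q ^ b := Nat.pow_lt_pow_right hq2 hab
    set r : Polynomial Fq := Polynomial.X ^ (q ^ b) - Polynomial.X ^ (q ^ a) with hr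
    have hr0 : r ≠ 0 := by
      intro hcon
      have := congrArg (fun g => Polynomial.coeff g (q ^ b)) hcon
      simp only [hr, Polynomial.coeff_sub, Polynomial.coeff_X_pow, Polynomial.coeff_zero] at this
      simp [hlt.ne'] at this
    have hev : (r.map c).eval θ = 0 := by
      simp only [hr, Polynomial.map_sub, Polynomial.map_pow, Polynomial.map_X,
        Polynomial.eval_sub, Polynomial.eval_pow, Polynomial.eval_X]
      rw [hEq]; ring
    exact hr0 (hT r hev)
  have hinj : Function.Injective (fun n : ℕ => θ ^ q ^ n) := by
    intro a b hab
    by_contra hne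
    rcases Nat.lt_or_ge a b with h | h
    · exact hkeyne a b h hab
    · exact hkeyne b a (by omega) hab.symm
  have hfin := Polynomial.finite_setOf_isRoot (RatFunc.denom_ne_zero f)
  exact Set.infinite_of_injective_forall_mem hinj (fun n => hroot n) hfin
end

section
/- Suppose a rational function f ∈ k̄(t) together with nonzero elements α₁, …, α_s ∈ k̄ and rational functions μ₁, …, μ_s ∈ 𝔽_q(t) (viewed inside k̄(t) via the inclusion 𝔽_q ⊆ k̄) satisfies the σ-difference equation (t − θ)·f^{(-1)} − f = Σ_{i=1}^{s} μ_i · α_i^{(-1)} · (t − θ). Then for every integer i ≥ 0 the rational function f is regular at t = θ^{q^i}. -/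
open Polynomial


section Aux
open Polynomial
variable {K : Type*} [Field K] {a : K}

lemma evalNZ_of_dvd {d e : K[X]} (h : d ∣ e) (he : e.eval a ≠ 0) : d.eval a ≠ 0 := by
  intro h0
  obtain ⟨r, rfl⟩ := h
  simp [h0] at he

lemma regAt_of_div (P : K[X]) {Q : K[X]} (hQ : Q.eval a ≠ 0) :
    (algebraMap K[X] (RatFunc K) P / algebraMap K[X] (RatFunc K) Q).denom.eval a ≠ 0 := by
  have hQ0 : Q ≠ 0 := fun h => hQ (by simp [h])
  exact evalNZ_of_dvd ((RatFunc.denom_dvd hQ0).mpr ⟨P, rfl⟩) hQ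

lemma regAt_mul {x y : RatFunc K} (hx : x.denom.eval a ≠ 0) (hy : y.denom.eval a ≠ 0) :
    (x * y).denom.eval a ≠ 0 :=
  evalNZ_of_dvd (RatFunc.denom_mul_dvd x y) (by simpa using mul_ne_zero hx hy)

lemma regAt_add {x y : RatFunc K} (hx : x.denom.eval a ≠ 0) (hy : y.denom.eval a ≠ 0) :
    (x + y).denom.eval a ≠ 0 :=
  evalNZ_of_dvd (RatFunc.denom_add_dvd x y) (by simpa using mul_ne_zero hx hy)

lemma regAt_algebraMap (P : K[X]) :
    ((algebraMap K[X] (RatFunc K) P).denom).eval a ≠ 0 := by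
  simp [RatFunc.denom_algebraMap]

lemma regAt_neg {x : RatFunc K} (hx : x.denom.eval a ≠ 0) : (-x).denom.eval a ≠ 0 := by
  have : -x = algebraMap K[X] (RatFunc K) (-1) * x := by simp
  rw [this]
  exact regAt_mul (regAt_algebraMap _) hx

lemma regAt_sub {x y : RatFunc K} (hx : x.denom.eval a ≠ 0) (hy : y.denom.eval a ≠ 0) :
    (x - y).denom.eval a ≠ 0 := by
  rw [sub_eq_add_neg]; exact regAt_add hx (regAt_neg hy)

lemma regAt_sum {ι : Type*} (s : Finset ι) (g : ι → RatFunc K)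
    (h : ∀ i ∈ s, (g i).denom.eval a ≠ 0) : (∑ i ∈ s, g i).denom.eval a ≠ 0 := by
  classical
  induction s using Finset.cons_induction with
  | empty => simp [RatFunc.denom_zero]
  | cons i s hi ih =>
    rw [Finset.sum_cons]
    exact regAt_add (h i (Finset.mem_cons_self _ _)) (ih fun j hj => h j (Finset.mem_cons_of_mem hj))

lemma coeffMap_div {K L : Type*} [Field K] [Field L] (c : K →+* L) (P Q : K[X]) :
    RatFunc.coeffMap c (algebraMap K[X] (RatFunc K) P / algebraMap K[X] (RatFunc K) Q) =
      algebraMap L[X] (RatFunc L) (P.map c) / algebraMap L[X] (RatFunc L) (Q.map c) := by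
  have h1 : ∀ x, RatFunc.coeffMap c x = RatFunc.map (Polynomial.mapRingHom c)
      (nonZeroDivisors_le_comap_nonZeroDivisors_of_injective _
        (Polynomial.map_injective _ c.injective)) x := fun x =>
    congrFun (RatFunc.coe_mapRingHom_eq_coe_map _ _) x
  rw [h1, RatFunc.map_apply_div]
  simp

lemma eval_map_hom {K L : Type*} [Field K] [Field L] (c : K →+* L) (Q : K[X]) (b : K) :
    (Q.map c).eval (c b) = c (Q.eval b) := by
  rw [Polynomial.eval_map, Polynomial.eval₂_hom]

end Aux

/-- If `f ∈ k̄(t)`, nonzero `α₁, …, α_s ∈ k̄` and `μ₁, …, μ_s ∈ 𝔽_q(t)` satisfy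
`(t − θ)·f⁽⁻¹⁾ − f = ∑ μᵢ·αᵢ⁽⁻¹⁾·(t − θ)`, then `f` is regular at `t = θ^{qⁱ}` for every integer `i ≥ 0`. -/
theorem carlitz_f_regular_at_theta_pow
    -- `q = p ^ m` is a prime power and `𝔽_q` is the field with `q` elements
    (p m q : ℕ) [Fact p.Prime] (hm : 0 < m) (hq : q = p ^ m)
    (Fq : Type*) [Field Fq] [Fintype Fq] [CharP Fq p] (hcard : Fintype.card Fq = q)
    -- `k̄` is an algebraic closure of `k = 𝔽_q(θ)`, and `θ` is the image of the variable
    (kbar : Type*) [Field kbar] [CharP kbar p] [PerfectRing kbar p]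
    [Algebra (RatFunc Fq) kbar] [IsAlgClosure (RatFunc Fq) kbar]
    (θ : kbar) (hθ : θ = algebraMap (RatFunc Fq) kbar RatFunc.X)
    -- `ψ : a ↦ a^{1/q}` is the inverse of the `q`-power Frobenius of `k̄`
    (ψ : kbar ≃+* kbar) (hψ : ψ = (iterateFrobeniusEquiv kbar p m).symm)
    -- the data `f`, `αᵢ`, `μᵢ`
    (s : ℕ) (α : Fin s → kbar) (hα : ∀ i, α i ≠ 0) (μ : Fin s → RatFunc Fq)
    (f : RatFunc kbar)
    -- the σ-difference equation `(t − θ)·f⁽⁻¹⁾ − f = ∑ μᵢ·αᵢ⁽⁻¹⁾·(t − θ)`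
    (heq : (RatFunc.X - RatFunc.C θ) * RatFunc.coeffMap (ψ : kbar →+* kbar) f - f =
      ∑ i, RatFunc.coeffMap
          ((algebraMap (RatFunc Fq) kbar).comp (algebraMap Fq (RatFunc Fq))) (μ i) *
        RatFunc.C (ψ (α i)) * (RatFunc.X - RatFunc.C θ)) :
    -- for every `i ≥ 0`, `f` is regular at `t = θ^{qⁱ}`:
    -- the denominator of `f` in lowest terms does not vanish at `θ ^ q ^ i`
    ∀ i : ℕ, Polynomial.eval (θ ^ q ^ i) f.denom ≠ 0 := by
  classical
  set ψR : kbar →+* kbar := (ψ : kbar →+* kbar) with hψR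
  set A : RatFunc Fq →+* kbar := algebraMap (RatFunc Fq) kbar with hA
  set c₀ : Fq →+* kbar := (algebraMap (RatFunc Fq) kbar).comp (algebraMap Fq (RatFunc Fq)) with hc₀
  have hq2 : 2 ≤ q := by
    rw [hq]
    calc 2 ≤ p := (Fact.out : p.Prime).two_le
      _ ≤ p ^ m := Nat.le_self_pow hm.ne' p
  have hψq : ∀ x : kbar, ψ (x ^ q) = x := by
    intro x
    have hx : x ^ q = iterateFrobeniusEquiv kbar p m x := by
      rw [iterateFrobeniusEquiv_def, hq]
    rw [hx, hψ, RingEquiv.symm_apply_apply]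
  have hθn : ∀ n : ℕ, θ ^ n = A (RatFunc.X ^ n) := fun n => by rw [hθ, map_pow, hA]
  have hXn : ∀ n : ℕ, (RatFunc.X : RatFunc Fq) ^ n
      = algebraMap Fq[X] (RatFunc Fq) (Polynomial.X ^ n) := fun n => by
    rw [map_pow, RatFunc.algebraMap_X]
  -- transcendence of θ ^ n over Fq, for n ≠ 0
  have hT : ∀ n : ℕ, n ≠ 0 → ∀ Q : Polynomial Fq, Q ≠ 0 → (Q.map c₀).eval (θ ^ n) ≠ 0 := by
    intro n hn Q hQ
    rw [hθn, Polynomial.eval_map, hc₀]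
    have e1 : Polynomial.eval₂ ((algebraMap (RatFunc Fq) kbar).comp (algebraMap Fq (RatFunc Fq)))
        (A (RatFunc.X ^ n)) Q
        = A (Polynomial.eval₂ (algebraMap Fq (RatFunc Fq)) (RatFunc.X ^ n) Q) :=
      (Polynomial.hom_eval₂ Q _ A _).symm
    rw [e1]
    intro h0
    have h0' : Polynomial.eval₂ (algebraMap Fq (RatFunc Fq)) (RatFunc.X ^ n) Q = 0 :=
      A.injective (h0.trans (map_zero A).symm)
    have hB : algebraMap Fq (RatFunc Fq) = (algebraMap Fq[X] (RatFunc Fq)).comp Polynomial.C := by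
      rw [IsScalarTower.algebraMap_eq Fq Fq[X] (RatFunc Fq), Polynomial.algebraMap_eq]
    rw [hB, hXn, ← Polynomial.hom_eval₂] at h0'
    have h0'' : Polynomial.eval₂ Polynomial.C (Polynomial.X ^ n) Q = 0 :=
      (RatFunc.algebraMap_injective Fq) (h0'.trans (map_zero _).symm)
    have hcomp : Q.comp (Polynomial.X ^ n) = 0 := h0''
    rw [Polynomial.comp_eq_zero_iff] at hcomp
    rcases hcomp with h | ⟨-, h⟩
    · exact hQ h
    · have := congrArg Polynomial.natDegree h
      rw [Polynomial.natDegree_X_pow, Polynomial.natDegree_C] at this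
      exact hn this
  -- the powers θ ^ q ^ j are pairwise distinct
  have hD : Function.Injective fun j : ℕ => θ ^ q ^ j := by
    intro j l h
    simp only [hθn, hXn] at h
    have h3 : (Polynomial.X : Polynomial Fq) ^ q ^ j = Polynomial.X ^ q ^ l :=
      (RatFunc.algebraMap_injective Fq) (A.injective h)
    have h4 := congrArg Polynomial.natDegree h3
    simp [Polynomial.natDegree_X_pow] at h4
    exact Nat.pow_right_injective hq2 h4
  -- key propagation step
  have key : ∀ j : ℕ, Polynomial.eval (θ ^ q ^ (j + 1)) f.denom ≠ 0 →
      Polynomial.eval (θ ^ q ^ j) f.denom ≠ 0 := by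
    intro j h1
    set a : kbar := θ ^ q ^ j with ha
    have haq : θ ^ q ^ (j + 1) = a ^ q := by rw [ha, ← pow_mul, pow_succ]
    rw [haq] at h1
    -- coeffMap ψ f is regular at a
    have hfψ : RatFunc.coeffMap ψR f
        = algebraMap (Polynomial kbar) (RatFunc kbar) (f.num.map ψR)
          / algebraMap (Polynomial kbar) (RatFunc kbar) (f.denom.map ψR) := by
      conv_lhs => rw [← RatFunc.num_div_denom f]
      rw [coeffMap_div]
    have hreg1 : (RatFunc.coeffMap ψR f).denom.eval a ≠ 0 := by
      rw [hfψ]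
      apply regAt_of_div
      have e : (f.denom.map ψR).eval a = ψ (f.denom.eval (a ^ q)) := by
        conv_lhs => rw [← hψq a]
        exact eval_map_hom ψR f.denom (a ^ q)
      rw [e]
      intro h0
      exact h1 (ψ.injective (h0.trans (map_zero ψ).symm))
    -- X - C θ is regular at a
    have hXC : (RatFunc.X - RatFunc.C θ : RatFunc kbar)
        = algebraMap (Polynomial kbar) (RatFunc kbar) (Polynomial.X - Polynomial.C θ) := by
      rw [map_sub, RatFunc.algebraMap_X, RatFunc.algebraMap_C]
    have hregXC : (RatFunc.X - RatFunc.C θ : RatFunc kbar).denom.eval a ≠ 0 := by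
      rw [hXC]; exact regAt_algebraMap _
    -- the right-hand side is regular at a
    have hregS : (∑ i, RatFunc.coeffMap c₀ (μ i) * RatFunc.C (ψ (α i))
        * (RatFunc.X - RatFunc.C θ)).denom.eval a ≠ 0 := by
      apply regAt_sum
      intro i _
      apply regAt_mul (regAt_mul ?_ ?_) hregXC
      · have hμ : RatFunc.coeffMap c₀ (μ i)
            = algebraMap (Polynomial kbar) (RatFunc kbar) ((μ i).num.map c₀)
              / algebraMap (Polynomial kbar) (RatFunc kbar) ((μ i).denom.map c₀) := by
          conv_lhs => rw [← RatFunc.num_div_denom (μ i)]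
          rw [coeffMap_div]
        rw [hμ]
        exact regAt_of_div _ (hT (q ^ j) (pow_ne_zero j (by omega)) _ (RatFunc.denom_ne_zero _))
      · rw [← RatFunc.algebraMap_C (ψ (α i))]
        exact regAt_algebraMap _
    -- rearrange the functional equation and conclude
    have hfe : f = (RatFunc.X - RatFunc.C θ) * RatFunc.coeffMap ψR f
        - ∑ i, RatFunc.coeffMap c₀ (μ i) * RatFunc.C (ψ (α i)) * (RatFunc.X - RatFunc.C θ) := by
      rw [hψR, hc₀]
      linear_combination -heq
    rw [hfe]
    exact regAt_sub (regAt_mul hregXC hreg1) hregS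
  intro i
  intro h0
  have hall : ∀ j : ℕ, Polynomial.eval (θ ^ q ^ (i + j)) f.denom = 0 := by
    intro j
    induction j with
    | zero => simpa using h0
    | succ n ih =>
      by_contra hc
      rw [show i + (n + 1) = (i + n) + 1 from rfl] at hc
      exact (key (i + n) hc) ih
  apply RatFunc.denom_ne_zero f
  apply Polynomial.eq_zero_of_infinite_isRoot
  apply Set.infinite_of_injective_forall_mem (f := fun j : ℕ => θ ^ q ^ (i + j))
  case hi =>
    intro j l hjl
    have := hD hjl
    omega
  case hf =>
    intro j
    exact hall j
end

section
/- The only rational function f ∈ k̄(t) satisfying the homogeneous σ-difference equation (t − θ)·f^{(-1)} = f is f = 0. -/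
open Polynomial

theorem aux_intDegree_algebraMap_div {L : Type*} [Field L] (a b : L[X]) (ha : a ≠ 0)
    (hb : b ≠ 0) :
    RatFunc.intDegree (algebraMap L[X] (RatFunc L) a / algebraMap L[X] (RatFunc L) b) =
      (a.natDegree : ℤ) - b.natDegree := by
  have hb' : algebraMap L[X] (RatFunc L) b ≠ 0 := by
    simpa using (RatFunc.algebraMap_ne_zero hb)
  have ha' : algebraMap L[X] (RatFunc L) a ≠ 0 := by
    simpa using (RatFunc.algebraMap_ne_zero ha)
  have hx : algebraMap L[X] (RatFunc L) a / algebraMap L[X] (RatFunc L) b ≠ 0 :=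
    div_ne_zero ha' hb'
  have key : algebraMap L[X] (RatFunc L) a =
      (algebraMap L[X] (RatFunc L) a / algebraMap L[X] (RatFunc L) b) *
        algebraMap L[X] (RatFunc L) b := (div_mul_cancel₀ _ hb').symm
  have := congrArg RatFunc.intDegree key
  rw [RatFunc.intDegree_mul hx hb', RatFunc.intDegree_polynomial,
    RatFunc.intDegree_polynomial] at this
  omega

theorem aux_intDegree_coeffMap {K L : Type*} [Field K] [Field L] (c : K →+* L)
    (f : RatFunc K) :
    RatFunc.intDegree (RatFunc.coeffMap c f) = RatFunc.intDegree f := by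
  rcases eq_or_ne f 0 with rfl | hf
  · simp
  have hnum : f.num ≠ 0 := RatFunc.num_ne_zero hf
  have hden : f.denom ≠ 0 := f.denom_ne_zero
  have h1 : RatFunc.coeffMap c f =
      algebraMap L[X] (RatFunc L) (f.num.map c) / algebraMap L[X] (RatFunc L) (f.denom.map c) := by
    conv_lhs => rw [← RatFunc.num_div_denom f]
    show RatFunc.map (Polynomial.mapRingHom c)
      (nonZeroDivisors_le_comap_nonZeroDivisors_of_injective _
        (Polynomial.map_injective _ c.injective)) _ = _
    rw [RatFunc.map_apply_div]
    rfl
  rw [h1, aux_intDegree_algebraMap_div _ _ (Polynomial.map_ne_zero_iff c.injective |>.mpr hnum)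
      (Polynomial.map_ne_zero_iff c.injective |>.mpr hden),
    Polynomial.natDegree_map_eq_of_injective c.injective,
    Polynomial.natDegree_map_eq_of_injective c.injective]
  rfl

/-- The only rational function `f ∈ k̄(t)` satisfying the homogeneous σ-difference equation
`(t − θ)·f⁽⁻¹⁾ = f` is `f = 0`. -/
theorem carlitz_homogeneous_equation_trivial
    -- `q = p ^ m` is a prime power and `𝔽_q` is the field with `q` elements
    (p m q : ℕ) [Fact p.Prime] (hm : 0 < m) (hq : q = p ^ m)
    (Fq : Type*) [Field Fq] [Fintype Fq] [CharP Fq p] (hcard : Fintype.card Fq = q)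
    -- `k̄` is an algebraic closure of `k = 𝔽_q(θ)`, and `θ` is the image of the variable
    (kbar : Type*) [Field kbar] [CharP kbar p] [PerfectRing kbar p]
    [Algebra (RatFunc Fq) kbar] [IsAlgClosure (RatFunc Fq) kbar]
    (θ : kbar) (hθ : θ = algebraMap (RatFunc Fq) kbar RatFunc.X)
    -- `ψ : a ↦ a^{1/q}` is the inverse of the `q`-power Frobenius of `k̄`
    (ψ : kbar ≃+* kbar) (hψ : ψ = (iterateFrobeniusEquiv kbar p m).symm)
    (f : RatFunc kbar)
    -- the homogeneous σ-difference equation `(t − θ)·f⁽⁻¹⁾ = f`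
    (heq : (RatFunc.X - RatFunc.C θ) * RatFunc.coeffMap (ψ : kbar →+* kbar) f = f) :
    f = 0 := by
  by_contra hf
  have hg : RatFunc.coeffMap (ψ : kbar →+* kbar) f ≠ 0 := by
    intro h
    exact hf ((RatFunc.coeffMap (ψ : kbar →+* kbar)).injective
      (by rw [h, map_zero]))
  have hlin : (RatFunc.X - RatFunc.C θ : RatFunc kbar) =
      algebraMap kbar[X] (RatFunc kbar) (Polynomial.X - Polynomial.C θ) := by
    rw [map_sub, RatFunc.algebraMap_X, RatFunc.algebraMap_C]
  have hXC : (RatFunc.X - RatFunc.C θ : RatFunc kbar) ≠ 0 := by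
    rw [hlin]
    exact RatFunc.algebraMap_ne_zero (Polynomial.X_sub_C_ne_zero θ)
  have hdeg := congrArg RatFunc.intDegree heq
  rw [RatFunc.intDegree_mul hXC hg, aux_intDegree_coeffMap, hlin,
    RatFunc.intDegree_polynomial, Polynomial.natDegree_X_sub_C] at hdeg
  omega
end

section
/- Let R be a ring, U an R-module, and Y ⊆ U a submodule which is semisimple as an R-module. If W₁ and W₂ are submodules of Y such that each natural quotient map U/Wᵢ → U/Y (i = 1, 2) admits an R-linear section, then the natural quotient map U/(W₁ ∩ W₂) → U/Y also admits an R-linear section. -/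
open Submodule LinearMap

theorem exists_rightInverse_of_semisimple {R M N : Type*} [Ring R] [AddCommGroup M]
    [Module R M] [AddCommGroup N] [Module R N] [IsSemisimpleModule R M]
    (f : M →ₗ[R] N) (hf : Function.Surjective f) :
    ∃ g : N →ₗ[R] M, f ∘ₗ g = LinearMap.id := by
  obtain ⟨C, hC⟩ := exists_isCompl (LinearMap.ker f)
  let f' : C →ₗ[R] N := f ∘ₗ C.subtype
  have hinj : Function.Injective f' := by
    rw [← LinearMap.ker_eq_bot, eq_bot_iff]
    rintro ⟨c, hc⟩ h
    have : c ∈ LinearMap.ker f ⊓ C := ⟨h, hc⟩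
    rw [hC.inf_eq_bot] at this
    simpa [Subtype.ext_iff] using this
  have hsurj : Function.Surjective f' := by
    intro n
    obtain ⟨m, rfl⟩ := hf n
    have : m ∈ LinearMap.ker f ⊔ C := by rw [hC.sup_eq_top]; trivial
    obtain ⟨k, hk, c, hc, rfl⟩ := mem_sup.1 this
    exact ⟨⟨c, hc⟩, by simp [f', LinearMap.mem_ker.1 hk]⟩
  let e := LinearEquiv.ofBijective f' ⟨hinj, hsurj⟩
  refine ⟨C.subtype ∘ₗ (e.symm : N →ₗ[R] C), ?_⟩
  ext n
  have h := e.apply_symm_apply n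
  change f' (e.symm n) = n at h
  exact h

/-- For submodules `W ≤ Y` of an `R`-module `U`, this says that the natural quotient map
`U/W → U/Y` admits an `R`-linear section. -/
def QuotMapHasSection {R U : Type*} [Ring R] [AddCommGroup U] [Module R U]
    (W Y : Submodule R U) (h : W ≤ Y) : Prop :=
  ∃ s : (U ⧸ Y) →ₗ[R] U ⧸ W,
    (Submodule.mapQ W Y LinearMap.id h) ∘ₗ s = LinearMap.id

/-- Let `Y ⊆ U` be a submodule which is semisimple as an `R`-module.  If `W₁, W₂ ⊆ Y` are
submodules such that each natural quotient map `U/Wᵢ → U/Y` admits an `R`-linear section,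
then so does the natural quotient map `U/(W₁ ∩ W₂) → U/Y`. -/
theorem quotMapHasSection_inf {R U : Type*} [Ring R] [AddCommGroup U] [Module R U]
    (Y : Submodule R U) (hY : IsSemisimpleModule R Y)
    (W₁ W₂ : Submodule R U) (h₁ : W₁ ≤ Y) (h₂ : W₂ ≤ Y)
    (hs₁ : QuotMapHasSection W₁ Y h₁) (hs₂ : QuotMapHasSection W₂ Y h₂) :
    QuotMapHasSection (W₁ ⊓ W₂) Y (le_trans inf_le_left h₁) := by
  obtain ⟨s₁, hq₁⟩ := hs₁
  obtain ⟨s₂, hq₂⟩ := hs₂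
  set W : Submodule R U := W₁ ⊓ W₂ with hW
  set Z : Submodule R U := W₁ ⊔ W₂ with hZ
  have hZY : Z ≤ Y := sup_le h₁ h₂
  -- the various quotient maps
  let p₁ : (U ⧸ W) →ₗ[R] U ⧸ W₁ := mapQ W W₁ LinearMap.id inf_le_left
  let p₂ : (U ⧸ W) →ₗ[R] U ⧸ W₂ := mapQ W W₂ LinearMap.id inf_le_right
  let r₁ : (U ⧸ W₁) →ₗ[R] U ⧸ Z := mapQ W₁ Z LinearMap.id le_sup_left
  let r₂ : (U ⧸ W₂) →ₗ[R] U ⧸ Z := mapQ W₂ Z LinearMap.id le_sup_right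
  let qZ : (U ⧸ Z) →ₗ[R] U ⧸ Y := mapQ Z Y LinearMap.id hZY
  let q₁ : (U ⧸ W₁) →ₗ[R] U ⧸ Y := mapQ W₁ Y LinearMap.id h₁
  let q₂ : (U ⧸ W₂) →ₗ[R] U ⧸ Y := mapQ W₂ Y LinearMap.id h₂
  have hq₁' : ∀ x, q₁ (s₁ x) = x := fun x ↦ LinearMap.congr_fun hq₁ x
  have hq₂' : ∀ x, q₂ (s₂ x) = x := fun x ↦ LinearMap.congr_fun hq₂ x
  have hqZr₁ : ∀ a, qZ (r₁ a) = q₁ a := by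
    intro a
    obtain ⟨u, rfl⟩ := W₁.mkQ_surjective a
    rfl
  have hqZr₂ : ∀ a, qZ (r₂ a) = q₂ a := by
    intro a
    obtain ⟨u, rfl⟩ := W₂.mkQ_surjective a
    rfl
  -- the images of Y inside the quotients
  let K₂ : Submodule R (U ⧸ W₂) := Y.map W₂.mkQ
  let K' : Submodule R (U ⧸ Z) := Y.map Z.mkQ
  have hK₂ : IsSemisimpleModule R K₂ := by
    have : K₂ = LinearMap.range (W₂.mkQ ∘ₗ Y.subtype) := by
      rw [LinearMap.range_comp, Submodule.range_subtype]
    rw [this]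
    exact IsSemisimpleModule.range _
  -- restriction of r₂ to a surjection K₂ → K'
  have hr₂K : ∀ a ∈ K₂, r₂ a ∈ K' := by
    rintro a ⟨y, hy, rfl⟩
    exact ⟨y, hy, rfl⟩
  let ρ : K₂ →ₗ[R] K' := r₂.restrict hr₂K
  have hρ : Function.Surjective ρ := by
    rintro ⟨x, y, hy, rfl⟩
    exact ⟨⟨W₂.mkQ y, ⟨y, hy, rfl⟩⟩, rfl⟩
  obtain ⟨σ, hσ⟩ := @exists_rightInverse_of_semisimple R K₂ K' _ _ _ _ _ hK₂ ρ hρ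
  have hσ' : ∀ k : K', ((σ k : K₂) : U ⧸ W₂) ∈ K₂ := fun k ↦ (σ k).2
  -- the defect map d and its corestriction δ
  let d : (U ⧸ Y) →ₗ[R] U ⧸ Z := r₁ ∘ₗ s₁ - r₂ ∘ₗ s₂
  have hd : ∀ x, d x ∈ K' := by
    intro x
    have h0 : qZ (d x) = 0 := by
      simp only [d, LinearMap.sub_apply, LinearMap.comp_apply, map_sub, hqZr₁, hqZr₂,
        hq₁', hq₂', sub_self]
    obtain ⟨u, hu⟩ := Z.mkQ_surjective (d x)
    have : Y.mkQ u = 0 := by rw [← h0, ← hu]; rfl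
    rw [← hu]
    exact ⟨u, (Submodule.Quotient.mk_eq_zero Y).1 this, rfl⟩
  let δ : (U ⧸ Y) →ₗ[R] K' := d.codRestrict K' hd
  -- the corrected second section
  let s₂' : (U ⧸ Y) →ₗ[R] U ⧸ W₂ := s₂ + K₂.subtype ∘ₗ σ ∘ₗ δ
  have hq₂'' : ∀ x, q₂ (s₂' x) = x := by
    intro x
    have hker : q₂ ((σ (δ x) : K₂) : U ⧸ W₂) = 0 := by
      obtain ⟨y, hy, hmk⟩ := (σ (δ x)).2
      rw [← hmk]
      simpa [q₂, Submodule.mapQ_apply] using (Submodule.Quotient.mk_eq_zero Y).2 hy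
    simp only [s₂', LinearMap.add_apply, map_add, hq₂', LinearMap.comp_apply,
      Submodule.subtype_apply, hker, add_zero]
  have hr : ∀ x, r₂ (s₂' x) = r₁ (s₁ x) := by
    intro x
    have h1 : r₂ ((σ (δ x) : K₂) : U ⧸ W₂) = d x := by
      have h2 : ρ (σ (δ x)) = δ x := LinearMap.congr_fun hσ (δ x)
      exact congrArg Subtype.val h2
    simp only [s₂', LinearMap.add_apply, map_add, LinearMap.comp_apply,
      Submodule.subtype_apply, h1]
    simp only [d, LinearMap.sub_apply, LinearMap.comp_apply]
    abel
  -- the fiber product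
  let T : ((U ⧸ W₁) × (U ⧸ W₂)) →ₗ[R] U ⧸ Z := r₁ ∘ₗ LinearMap.fst R _ _ - r₂ ∘ₗ LinearMap.snd R _ _
  let Φ₀ : (U ⧸ W) →ₗ[R] (U ⧸ W₁) × (U ⧸ W₂) := p₁.prod p₂
  have hΦ₀ : ∀ v, Φ₀ v ∈ LinearMap.ker T := by
    intro v
    obtain ⟨u, rfl⟩ := W.mkQ_surjective v
    show r₁ (p₁ (W.mkQ u)) - r₂ (p₂ (W.mkQ u)) = 0
    show Z.mkQ u - Z.mkQ u = 0
    rw [sub_self]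
  let Φ : (U ⧸ W) →ₗ[R] LinearMap.ker T := Φ₀.codRestrict _ hΦ₀
  have hΦinj : Function.Injective Φ := by
    rw [← LinearMap.ker_eq_bot, eq_bot_iff]
    intro v hv
    obtain ⟨u, rfl⟩ := W.mkQ_surjective v
    have h1 : p₁ (W.mkQ u) = 0 := congrArg (Prod.fst ∘ Subtype.val) (LinearMap.mem_ker.1 hv)
    have h2 : p₂ (W.mkQ u) = 0 := congrArg (Prod.snd ∘ Subtype.val) (LinearMap.mem_ker.1 hv)
    have hu1 : u ∈ W₁ := (Submodule.Quotient.mk_eq_zero W₁).1 h1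
    have hu2 : u ∈ W₂ := (Submodule.Quotient.mk_eq_zero W₂).1 h2
    simpa using (Submodule.Quotient.mk_eq_zero W).2 ⟨hu1, hu2⟩
  have hΦsurj : Function.Surjective Φ := by
    rintro ⟨⟨a, b⟩, hab⟩
    obtain ⟨u, rfl⟩ := W₁.mkQ_surjective a
    obtain ⟨v, rfl⟩ := W₂.mkQ_surjective b
    have h0 : Z.mkQ u - Z.mkQ v = 0 := hab
    have huv : u - v ∈ Z := by
      rw [← Submodule.Quotient.mk_eq_zero Z]
      rw [← map_sub] at h0
      exact h0
    obtain ⟨w₁, hw₁, w₂, hw₂, hsum⟩ := mem_sup.1 huv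
    refine ⟨W.mkQ (u - w₁), ?_⟩
    apply Subtype.ext
    apply Prod.ext
    · show W₁.mkQ (u - w₁) = W₁.mkQ u
      have hz : W₁.mkQ w₁ = 0 := (Submodule.Quotient.mk_eq_zero W₁).2 hw₁
      rw [map_sub, hz, sub_zero]
    · show W₂.mkQ (u - w₁) = W₂.mkQ v
      have habel : u - w₁ - (v + w₂) = u - v - (w₁ + w₂) := by abel
      have hz2 : u - w₁ = v + w₂ := by
        rw [← sub_eq_zero, habel, ← hsum, sub_self]
      have hz : W₂.mkQ w₂ = 0 := (Submodule.Quotient.mk_eq_zero W₂).2 hw₂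
      rw [hz2, map_add, hz, add_zero]
  let e := LinearEquiv.ofBijective Φ ⟨hΦinj, hΦsurj⟩
  -- the combined map into the fiber product
  let g₀ : (U ⧸ Y) →ₗ[R] (U ⧸ W₁) × (U ⧸ W₂) := s₁.prod s₂'
  have hg₀ : ∀ x, g₀ x ∈ LinearMap.ker T := by
    intro x
    show r₁ (s₁ x) - r₂ (s₂' x) = 0
    rw [hr, sub_self]
  let g : (U ⧸ Y) →ₗ[R] LinearMap.ker T := g₀.codRestrict _ hg₀
  refine ⟨(e.symm : LinearMap.ker T →ₗ[R] U ⧸ W) ∘ₗ g, LinearMap.ext fun x ↦ ?_⟩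
  have key : Φ (e.symm (g x)) = g x := e.apply_symm_apply (g x)
  have key1 : p₁ (e.symm (g x)) = s₁ x := congrArg (Prod.fst ∘ Subtype.val) key
  have hcomp : ∀ v : U ⧸ W, mapQ W Y LinearMap.id (le_trans inf_le_left h₁) v = q₁ (p₁ v) := by
    intro v
    obtain ⟨u, rfl⟩ := W.mkQ_surjective v
    rfl
  simp only [LinearMap.comp_apply, LinearMap.id_apply, LinearEquiv.coe_coe]
  rw [hcomp, key1, hq₁']
end
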